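/- Let p ≥ 2 and let α_1, …, α_p, β_1, …, β_{p−1} ∈ ℂ[[y]] be such that f = ∏_{i=1}^p (X − α_i) ∈ ℂ[[y]][X] has derivative (with respect to X) equal to p · ∏_{j=1}^{p−1} (X − β_j). Then for every j ∈ {1, …, p−1} there exist indices k, l ∈ {1, …, p} such that O(α_k, β_j) = O(α_l, β_j) = O(α_k, α_l) = max_{i=1,…,p} O(α_i, β_j), where the maximum and the contact orders are taken in ℕ ∪ {∞}. -/

import Mathlib

open PowerSeries

lemma aux_order_X_pow_mul (n : ℕ) (g : PowerSeries ℂ) (hg : constantCoeff g ≠ 0) :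
    ((X : PowerSeries ℂ) ^ n * g).order = n := by
  have h0 : g.order = (0 : ℕ) := by
    rw [PowerSeries.order_eq_nat]
    exact ⟨by simpa using hg, fun i hi => absurd hi (Nat.not_lt_zero i)⟩
  rw [PowerSeries.order_mul, PowerSeries.order_X_pow, h0]
  simp

lemma aux_decomp (φ : PowerSeries ℂ) (hφ : φ ≠ 0) :
    ∃ (n : ℕ) (g : PowerSeries ℂ), φ = X ^ n * g ∧ constantCoeff g ≠ 0 ∧ φ.order = n := by
  have h : φ.order < ⊤ := PowerSeries.order_finite_iff_ne_zero.mpr hφ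
  set n := φ.order.lift h with hn
  have hord : φ.order = (n : ℕ∞) := (ENat.coe_lift _ h).symm
  obtain ⟨g, hg⟩ : X ^ n ∣ φ := by
    have := PowerSeries.X_pow_order_dvd (φ := φ)
    rwa [show φ.order.toNat = n by rw [hord, ENat.toNat_coe]] at this
  refine ⟨n, g, hg, ?_, hord⟩
  have hgo : g.order = 0 := by
    have := hord
    rw [hg, PowerSeries.order_mul, PowerSeries.order_X_pow] at this
    have h2 : (n : ℕ∞) + 0 = (n : ℕ∞) + g.order := by
      rw [add_zero]; exact this.symm
    exact (WithTop.add_left_cancel (WithTop.coe_ne_top) h2).symm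
  intro hc
  have : coeff (0 : ℕ) g ≠ 0 := by
    have := PowerSeries.order_eq_nat.mp (by exact_mod_cast hgo)
    exact this.1
  exact this (by simpa using hc)

lemma aux_derivative_prod {R ι : Type*} [CommRing R] [DecidableEq ι] (s : Finset ι)
    (f : ι → Polynomial R) :
    Polynomial.derivative (∏ i ∈ s, f i)
      = ∑ i ∈ s, (∏ j ∈ s.erase i, f j) * Polynomial.derivative (f i) := by
  classical
  rw [Finset.prod_eq_multiset_prod, Polynomial.derivative_prod, Finset.sum_eq_multiset_sum]
  refine congrArg Multiset.sum (Multiset.map_congr rfl fun i _ => ?_)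
  rw [Finset.prod_eq_multiset_prod, Finset.erase_val]



open PowerSeries in
/-- Corollary 2 of the paper (part of Lemma 3.3 of Kuo–Lu): for every Newton–Puiseux
root `β_j` of `∂f/∂x` there are two roots `α_k`, `α_l` of `f` realizing, together with
each other, the maximal contact of `β_j` with the roots of `f`. -/
theorem stmt_1 (p : ℕ) (hp : 2 ≤ p) (α : Fin p → PowerSeries ℂ)
    (β : Fin (p - 1) → PowerSeries ℂ)
    (hder : Polynomial.derivative (∏ i, (Polynomial.X - Polynomial.C (α i)))
      = (p : Polynomial (PowerSeries ℂ)) * ∏ j, (Polynomial.X - Polynomial.C (β j))) :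
    ∀ j : Fin (p - 1), ∃ k l : Fin p,
      (α k - β j).order = Finset.univ.sup (fun i => (α i - β j).order) ∧
      (α l - β j).order = Finset.univ.sup (fun i => (α i - β j).order) ∧
      (α k - α l).order = Finset.univ.sup (fun i => (α i - β j).order) := by
  intro j
  set b := β j with hb
  -- β j is a root of the derivative
  have hev : (Polynomial.derivative (∏ i, (Polynomial.X - Polynomial.C (α i)))).eval b = 0 := by
    rw [hder, Polynomial.eval_mul, Polynomial.eval_prod,
      Finset.prod_eq_zero (Finset.mem_univ j) (by simp [hb]), mul_zero]
  -- the key identity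
  have hsum : ∑ i, ∏ m ∈ Finset.univ.erase i, (b - α m) = 0 := by
    rw [aux_derivative_prod] at hev
    simpa [Polynomial.eval_finset_sum, Polynomial.eval_prod] using hev
  by_cases hA : ∃ k, α k = b
  · obtain ⟨k, hk⟩ := hA
    have hsup : Finset.univ.sup (fun i => (α i - b).order) = ⊤ := by
      apply le_antisymm le_top
      calc (⊤ : ℕ∞) = (α k - b).order := by rw [hk, sub_self, PowerSeries.order_zero]
        _ ≤ _ := Finset.le_sup (f := fun i => (α i - b).order) (Finset.mem_univ k)
    refine ⟨k, k, ?_, ?_, ?_⟩ <;>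
      rw [hsup] <;> rw [hk] <;> simp [PowerSeries.order_zero]
  · push_neg at hA
    have hne : ∀ i, b - α i ≠ 0 := fun i h => hA i (sub_eq_zero.mp h).symm
    choose n g hXg hgc hordn using fun i => aux_decomp (b - α i) (hne i)
    have hnp : Nonempty (Fin p) := ⟨⟨0, by omega⟩⟩
    set M := Finset.univ.sup n with hM
    obtain ⟨i0, -, hi0⟩ := Finset.exists_mem_eq_sup Finset.univ Finset.univ_nonempty n
    have hMle : ∀ i, n i ≤ M := fun i => Finset.le_sup (Finset.mem_univ i)
    -- orders of α i - b
    have hordi : ∀ i, (α i - b).order = (n i : ℕ∞) := by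
      intro i
      have h1 : α i - b = X ^ (n i) * (-(g i)) := by
        have := hXg i
        rw [show α i - b = -(b - α i) by ring, this]; ring
      rw [h1, aux_order_X_pow_mul _ _ (by simpa using hgc i)]
    have hsupord : Finset.univ.sup (fun i => (α i - b).order) = (M : ℕ∞) := by
      apply le_antisymm
      · exact Finset.sup_le fun i _ => by
          rw [hordi i]; exact_mod_cast Nat.cast_le.mpr (hMle i)
      · calc (M : ℕ∞) = (α i0 - b).order := by rw [hordi i0, hM, hi0]
          _ ≤ _ := Finset.le_sup (f := fun i => (α i - b).order) (Finset.mem_univ i0)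
    -- totals
    set T := ∑ m, n m with hT
    have hTi : ∀ i : Fin p, n i + ∑ m ∈ Finset.univ.erase i, n m = T :=
      fun i => Finset.add_sum_erase _ _ (Finset.mem_univ i)
    have hMT : M ≤ T := by
      have := hTi i0; rw [← hi0] at this; omega
    have hEi : ∀ i : Fin p, ∑ m ∈ Finset.univ.erase i, n m = (T - M) + (M - n i) := by
      intro i
      have h1 := hTi i
      have h2 := hMle i
      omega
    -- rewrite the sum
    have hprod : ∀ i : Fin p, ∏ m ∈ Finset.univ.erase i, (b - α m)
        = X ^ (T - M) * (X ^ (M - n i) * ∏ m ∈ Finset.univ.erase i, g m) := by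
      intro i
      calc ∏ m ∈ Finset.univ.erase i, (b - α m)
          = ∏ m ∈ Finset.univ.erase i, (X ^ (n m) * g m) :=
            Finset.prod_congr rfl fun m _ => hXg m
        _ = (∏ m ∈ Finset.univ.erase i, (X : PowerSeries ℂ) ^ (n m))
              * ∏ m ∈ Finset.univ.erase i, g m := Finset.prod_mul_distrib
        _ = X ^ (∑ m ∈ Finset.univ.erase i, n m)
              * ∏ m ∈ Finset.univ.erase i, g m := by
            rw [Finset.prod_pow_eq_pow_sum]
        _ = _ := by rw [hEi i, pow_add, mul_assoc]
    have hsum2 : ∑ i, (X ^ (M - n i) * ∏ m ∈ Finset.univ.erase i, g m) = 0 := by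
      have h1 : (X : PowerSeries ℂ) ^ (T - M)
          * ∑ i, (X ^ (M - n i) * ∏ m ∈ Finset.univ.erase i, g m) = 0 := by
        rw [Finset.mul_sum, ← hsum]
        exact (Finset.sum_congr rfl fun i _ => (hprod i).symm)
      rcases mul_eq_zero.mp h1 with h | h
      · exact absurd h (pow_ne_zero _ PowerSeries.X_ne_zero)
      · exact h
    -- take constant coefficients
    set c : Fin p → ℂ := fun m => constantCoeff (g m) with hc
    have hcne : ∀ m, c m ≠ 0 := hgc
    have hCzero : ∑ i, (if n i = M then ∏ m ∈ Finset.univ.erase i, c m else 0) = 0 := by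
      have h1 : ∑ i, constantCoeff (X ^ (M - n i) * ∏ m ∈ Finset.univ.erase i, g m)
          = 0 := by rw [← map_sum, hsum2, map_zero]
      have heq : ∑ i, (if n i = M then ∏ m ∈ Finset.univ.erase i, c m else 0)
          = ∑ i, constantCoeff (X ^ (M - n i) * ∏ m ∈ Finset.univ.erase i, g m) := by
        refine Finset.sum_congr rfl fun i _ => ?_
        by_cases h : n i = M
        · rw [if_pos h, h, Nat.sub_self, pow_zero, one_mul, map_prod]
        · have hMn : M - n i ≠ 0 := by have := hMle i; omega
          rw [if_neg h, map_mul, map_pow, PowerSeries.constantCoeff_X, zero_pow hMn, zero_mul]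
      rw [heq, h1]
    set P : ℂ := ∏ m, c m with hP
    have hPne : P ≠ 0 := Finset.prod_ne_zero_iff.mpr fun m _ => hcne m
    have hinv : ∑ i, (if n i = M then (c i)⁻¹ else 0) = 0 := by
      have h1 : ∑ i, (if n i = M then ∏ m ∈ Finset.univ.erase i, c m else 0)
          = P * ∑ i, (if n i = M then (c i)⁻¹ else 0) := by
        rw [Finset.mul_sum]
        refine Finset.sum_congr rfl fun i _ => ?_
        by_cases h : n i = M
        · rw [if_pos h, if_pos h]
          have h2 : c i * ∏ m ∈ Finset.univ.erase i, c m = P :=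
            Finset.mul_prod_erase _ _ (Finset.mem_univ i)
          rw [← h2, mul_comm (c i), mul_assoc, mul_inv_cancel₀ (hcne i), mul_one]
        · rw [if_neg h, if_neg h, mul_zero]
      rw [h1] at hCzero
      rcases mul_eq_zero.mp hCzero with h | h
      · exact absurd h hPne
      · exact h
    -- find two indices with distinct leading coefficients
    have hkl : ∃ k l : Fin p, n k = M ∧ n l = M ∧ c k ≠ c l := by
      by_contra hcon
      push_neg at hcon
      have hi0M : n i0 = M := hi0.symm
      have hall : ∀ i ∈ Finset.univ.filter (fun i => n i = M), (c i)⁻¹ = (c i0)⁻¹ := by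
        intro i hi
        rw [Finset.mem_filter] at hi
        rw [hcon i i0 hi.2 hi0M]
      have h2 : ∑ i, (if n i = M then (c i)⁻¹ else 0)
          = ((Finset.univ.filter (fun i => n i = M)).card : ℂ) * (c i0)⁻¹ := by
        rw [← Finset.sum_filter, Finset.sum_congr rfl hall, Finset.sum_const, nsmul_eq_mul]
      rw [h2] at hinv
      rcases mul_eq_zero.mp hinv with h | h
      · have hmem : i0 ∈ Finset.univ.filter (fun i => n i = M) := by
          simp [hi0M]
        have : (Finset.univ.filter (fun i => n i = M)).card ≠ 0 :=
          Finset.card_ne_zero_of_mem hmem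
        exact this (by exact_mod_cast h)
      · exact inv_ne_zero (hcne i0) h
    obtain ⟨k, l, hkM, hlM, hckl⟩ := hkl
    refine ⟨k, l, ?_, ?_, ?_⟩
    · rw [hordi k, hkM, hsupord]
    · rw [hordi l, hlM, hsupord]
    · have h1 : α k - α l = X ^ M * (g l - g k) := by
        have hk' : b - α k = X ^ M * g k := by rw [← hkM]; exact hXg k
        have hl' : b - α l = X ^ M * g l := by rw [← hlM]; exact hXg l
        calc α k - α l = (b - α l) - (b - α k) := by ring
          _ = X ^ M * g l - X ^ M * g k := by rw [hk', hl']
          _ = X ^ M * (g l - g k) := by ring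
      rw [h1, hsupord, aux_order_X_pow_mul _ _ ?_]
      rw [map_sub]
      exact sub_ne_zero.mpr fun h => hckl (h.symm)
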